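/- Let n ≥ 1, Ω ⊆ ℝ × ℝ^n open, and g : (0,∞) → ℝ twice continuously differentiable. Let ρ : Ω → (0,∞) be continuously differentiable and ψ : Ω → ℝ twice continuously differentiable; set v := ∇_x ψ, q := ρ v, and p := ρ g′(ρ) − g(ρ). Assume on Ω the conservation of mass ∂_t ρ + div_x q = 0 and the Bernoulli relation ∂_t ψ + |v|²/2 + g′(ρ) = 0. Then the second form of the Euler–Lagrange equations holds on Ω: conservation of momentum ∂_t q + Div_x( ρ v ⊗ v + p I_n ) = 0 and conservation of energy ∂_t( ρ|v|²/2 + g(ρ) ) + div_x( ( ρ|v|²/2 + ρ g′(ρ) ) v ) = 0. -/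

import Mathlib

open scoped BigOperators

/-- Time partial derivative of a scalar function on spacetime `ℝ × ℝⁿ`. -/
noncomputable def pt {n : ℕ} (f : ℝ × (Fin n → ℝ) → ℝ) (p : ℝ × (Fin n → ℝ)) : ℝ :=
  fderiv ℝ f p (1, 0)

/-- Spatial partial derivative `∂_j` of a scalar function on spacetime `ℝ × ℝⁿ`. -/
noncomputable def px {n : ℕ} (j : Fin n) (f : ℝ × (Fin n → ℝ) → ℝ) (p : ℝ × (Fin n → ℝ)) :
    ℝ :=
  fderiv ℝ f p (0, Pi.single j 1)

/-- The velocity field `v = ∇_x ψ` of a potential flow. -/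
noncomputable def vel {n : ℕ} (ψ : ℝ × (Fin n → ℝ) → ℝ) (p : ℝ × (Fin n → ℝ)) :
    Fin n → ℝ :=
  fun i => px i ψ p

/-- for an irrotational flow `v = ∇_x ψ` satisfying conservation of mass and
the Bernoulli relation, the second form of the Euler–Lagrange equations holds:
conservation of momentum and conservation of energy. -/
theorem stmt14 (n : ℕ) (hn : 1 ≤ n) (Ω : Set (ℝ × (Fin n → ℝ))) (hΩ : IsOpen Ω)
    (g : ℝ → ℝ) (hg : ContDiffOn ℝ 2 g (Set.Ioi 0))
    (ρ : ℝ × (Fin n → ℝ) → ℝ) (hρpos : ∀ p ∈ Ω, 0 < ρ p) (hρ : ContDiffOn ℝ 1 ρ Ω)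
    (ψ : ℝ × (Fin n → ℝ) → ℝ) (hψ : ContDiffOn ℝ 2 ψ Ω)
    -- conservation of mass: ∂_t ρ + div_x (ρ v) = 0
    (hmass : ∀ p ∈ Ω, pt ρ p + ∑ j, px j (fun z => ρ z * vel ψ z j) p = 0)
    -- Bernoulli relation: ∂_t ψ + |v|²/2 + g′(ρ) = 0
    (hber : ∀ p ∈ Ω, pt ψ p + (∑ i, vel ψ p i ^ 2) / 2 + deriv g (ρ p) = 0) :
    -- conservation of momentum: ∂_t q + Div_x (ρ v ⊗ v + p Iₙ) = 0
    (∀ p ∈ Ω, ∀ i : Fin n,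
      pt (fun z => ρ z * vel ψ z i) p
        + ∑ j, px j (fun z =>
            ρ z * vel ψ z i * vel ψ z j
              + (ρ z * deriv g (ρ z) - g (ρ z)) * (if i = j then 1 else 0)) p = 0) ∧
    -- conservation of energy: ∂_t (ρ|v|²/2 + g(ρ)) + div_x ((ρ|v|²/2 + ρ g′(ρ)) v) = 0
    (∀ p ∈ Ω,
      pt (fun z => ρ z * (∑ i, vel ψ z i ^ 2) / 2 + g (ρ z)) p
        + ∑ j, px j (fun z =>
            (ρ z * (∑ i, vel ψ z i ^ 2) / 2 + ρ z * deriv g (ρ z)) * vel ψ z j) p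
          = 0) := by
  have main : ∀ p₀ ∈ Ω, (∀ i : Fin n,
      pt (fun z => ρ z * vel ψ z i) p₀
        + ∑ j, px j (fun z =>
            ρ z * vel ψ z i * vel ψ z j
              + (ρ z * deriv g (ρ z) - g (ρ z)) * (if i = j then 1 else 0)) p₀ = 0) ∧
      (pt (fun z => ρ z * (∑ i, vel ψ z i ^ 2) / 2 + g (ρ z)) p₀
        + ∑ j, px j (fun z =>
            (ρ z * (∑ i, vel ψ z i ^ 2) / 2 + ρ z * deriv g (ρ z)) * vel ψ z j) p₀
          = 0) := by
    intro p₀ hp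
    simp only [pt, px, vel, pow_two, div_eq_mul_inv] at hmass hber ⊢
    have hmem : Ω ∈ nhds p₀ := hΩ.mem_nhds hp
    have hr : 0 < ρ p₀ := hρpos p₀ hp
    have hA : HasFDerivAt ρ (fderiv ℝ ρ p₀) p₀ :=
      ((hρ.differentiableOn one_ne_zero).differentiableAt hmem).hasFDerivAt
    have hψd : DifferentiableOn ℝ ψ Ω := hψ.differentiableOn two_ne_zero
    have hF : ContDiffOn ℝ 1 (fderiv ℝ ψ) Ω :=
      ((contDiffOn_succ_iff_fderiv_of_isOpen (n := 1) hΩ).1 hψ).2.2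
    have hHd : HasFDerivAt (fderiv ℝ ψ) (fderiv ℝ (fderiv ℝ ψ) p₀) p₀ :=
      ((hF.differentiableOn one_ne_zero).differentiableAt hmem).hasFDerivAt
    have hev : ∀ᶠ z in nhds p₀, HasFDerivAt ψ (fderiv ℝ ψ z) z := by
      filter_upwards [hmem] with z hz
      exact (hψd.differentiableAt (hΩ.mem_nhds hz)).hasFDerivAt
    have hsym : ∀ u w, fderiv ℝ (fderiv ℝ ψ) p₀ u w = fderiv ℝ (fderiv ℝ ψ) p₀ w u := fun u w =>
      second_derivative_symmetric_of_eventually hev hHd u w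
    have hvel : ∀ w : ℝ × (Fin n → ℝ), HasFDerivAt (fun z => fderiv ℝ ψ z w)
        (((fderiv ℝ ψ p₀).comp (0 : (ℝ × (Fin n → ℝ)) →L[ℝ] (ℝ × (Fin n → ℝ))))
          + (fderiv ℝ (fderiv ℝ ψ) p₀).flip w) p₀ := fun w =>
      hHd.clm_apply (hasFDerivAt_const w p₀)
    have hgc : ContDiffAt ℝ 2 g (ρ p₀) := hg.contDiffAt (isOpen_Ioi.mem_nhds hr)
    have hg1 : HasDerivAt g (deriv g (ρ p₀)) (ρ p₀) := (hgc.differentiableAt two_ne_zero).hasDerivAt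
    have hg'c : ContDiffOn ℝ 1 (deriv g) (Set.Ioi 0) :=
      hg.deriv_of_isOpen isOpen_Ioi (by norm_num)
    have hg2 : HasDerivAt (deriv g) (deriv (deriv g) (ρ p₀)) (ρ p₀) :=
      ((hg'c.differentiableOn one_ne_zero).differentiableAt (isOpen_Ioi.mem_nhds hr)).hasDerivAt
    have hgρ : HasFDerivAt (fun z => g (ρ z)) (deriv g (ρ p₀) • fderiv ℝ ρ p₀) p₀ :=
      hg1.comp_hasFDerivAt p₀ hA
    have hg'ρ : HasFDerivAt (fun z => deriv g (ρ z))
        (deriv (deriv g) (ρ p₀) • fderiv ℝ ρ p₀) p₀ := hg2.comp_hasFDerivAt p₀ hA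
    -- value lemma for ρ * ∂ψ/∂w
    have hv1 : ∀ w u : ℝ × (Fin n → ℝ),
        fderiv ℝ (fun z => ρ z * fderiv ℝ ψ z w) p₀ u
          = ρ p₀ * fderiv ℝ (fderiv ℝ ψ) p₀ u w + fderiv ℝ ψ p₀ w * fderiv ℝ ρ p₀ u := by
      intro w u
      rw [(hA.fun_mul (hvel w)).fderiv]; simp
    -- mass in evaluated form
    have hm := hmass p₀ hp
    simp only [hv1] at hm
    -- derivative of sum of squares
    have hS : HasFDerivAt
        (fun z => ∑ k, fderiv ℝ ψ z ((0 : ℝ), Pi.single k (1:ℝ))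
            * fderiv ℝ ψ z ((0 : ℝ), Pi.single k (1:ℝ)))
        (∑ k, (fderiv ℝ ψ p₀ ((0 : ℝ), Pi.single k (1:ℝ)) •
            (((fderiv ℝ ψ p₀).comp (0 : (ℝ × (Fin n → ℝ)) →L[ℝ] (ℝ × (Fin n → ℝ))))
              + (fderiv ℝ (fderiv ℝ ψ) p₀).flip ((0 : ℝ), Pi.single k (1:ℝ)))
          + fderiv ℝ ψ p₀ ((0 : ℝ), Pi.single k (1:ℝ)) •
            (((fderiv ℝ ψ p₀).comp (0 : (ℝ × (Fin n → ℝ)) →L[ℝ] (ℝ × (Fin n → ℝ))))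
              + (fderiv ℝ (fderiv ℝ ψ) p₀).flip ((0 : ℝ), Pi.single k (1:ℝ))))) p₀ :=
      HasFDerivAt.fun_sum fun k _ => (hvel _).fun_mul (hvel _)
    -- doubling identity
    have hdbl : ∀ u : ℝ × (Fin n → ℝ),
        ∑ k, (fderiv ℝ ψ p₀ ((0:ℝ), Pi.single k (1:ℝ))
              * fderiv ℝ (fderiv ℝ ψ) p₀ u ((0:ℝ), Pi.single k (1:ℝ))
            + fderiv ℝ ψ p₀ ((0:ℝ), Pi.single k (1:ℝ))
              * fderiv ℝ (fderiv ℝ ψ) p₀ u ((0:ℝ), Pi.single k (1:ℝ)))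
          = 2 * ∑ k, fderiv ℝ ψ p₀ ((0:ℝ), Pi.single k (1:ℝ))
              * fderiv ℝ (fderiv ℝ ψ) p₀ u ((0:ℝ), Pi.single k (1:ℝ)) := by
      intro u; rw [Finset.mul_sum]; exact Finset.sum_congr rfl fun k _ => by ring
    -- Bernoulli, differentiated, in evaluated form
    have hb : ∀ u : ℝ × (Fin n → ℝ),
        fderiv ℝ (fderiv ℝ ψ) p₀ u (1, 0)
          + ∑ k, fderiv ℝ ψ p₀ ((0:ℝ), Pi.single k (1:ℝ))
              * fderiv ℝ (fderiv ℝ ψ) p₀ u ((0:ℝ), Pi.single k (1:ℝ))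
          + deriv (deriv g) (ρ p₀) * fderiv ℝ ρ p₀ u = 0 := by
      have hBf := ((hvel ((1:ℝ), (0 : Fin n → ℝ))).fun_add (hS.mul_const 2⁻¹)).fun_add hg'ρ
      intro u
      have h0 : fderiv ℝ (fun z => fderiv ℝ ψ z ((1:ℝ), (0 : Fin n → ℝ))
          + (∑ k, fderiv ℝ ψ z ((0:ℝ), Pi.single k (1:ℝ))
              * fderiv ℝ ψ z ((0:ℝ), Pi.single k (1:ℝ))) * 2⁻¹
          + deriv g (ρ z)) p₀ = 0 := by
        have heq : (fun z => fderiv ℝ ψ z ((1:ℝ), (0 : Fin n → ℝ))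
            + (∑ k, fderiv ℝ ψ z ((0:ℝ), Pi.single k (1:ℝ))
                * fderiv ℝ ψ z ((0:ℝ), Pi.single k (1:ℝ))) * 2⁻¹
            + deriv g (ρ z)) =ᶠ[nhds p₀] (fun _ => (0:ℝ)) := by
          filter_upwards [hmem] with z hz using hber z hz
        rw [heq.fderiv_eq]
        exact fderiv_const_apply 0
      have h2 := hBf.fderiv
      rw [h0] at h2
      have h3 := congrFun (congrArg
        (fun (L : (ℝ × (Fin n → ℝ)) →L[ℝ] ℝ) => (L : (ℝ × (Fin n → ℝ)) → ℝ)) h2) u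
      simp only [ContinuousLinearMap.add_apply, ContinuousLinearMap.coe_comp',
        Function.comp_apply, ContinuousLinearMap.zero_apply, ContinuousLinearMap.flip_apply,
        ContinuousLinearMap.smul_apply, ContinuousLinearMap.coe_sum', Finset.sum_apply,
        ContinuousLinearMap.coe_smul', Pi.smul_apply, smul_eq_mul, map_zero, zero_add] at h3
      rw [hdbl u] at h3
      linarith
    constructor
    · -- momentum
      intro i
      have hv2 : ∀ j : Fin n,
          fderiv ℝ (fun z => ρ z * fderiv ℝ ψ z ((0:ℝ), Pi.single i (1:ℝ))
              * fderiv ℝ ψ z ((0:ℝ), Pi.single j (1:ℝ))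
              + (ρ z * deriv g (ρ z) - g (ρ z)) * (if i = j then 1 else 0)) p₀
            ((0:ℝ), Pi.single j (1:ℝ))
          = fderiv ℝ ψ p₀ ((0:ℝ), Pi.single i (1:ℝ))
              * (ρ p₀ * fderiv ℝ (fderiv ℝ ψ) p₀ ((0:ℝ), Pi.single j (1:ℝ)) ((0:ℝ), Pi.single j (1:ℝ))
                + fderiv ℝ ψ p₀ ((0:ℝ), Pi.single j (1:ℝ)) * fderiv ℝ ρ p₀ ((0:ℝ), Pi.single j (1:ℝ)))
            + ρ p₀ * (fderiv ℝ ψ p₀ ((0:ℝ), Pi.single j (1:ℝ))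
                * fderiv ℝ (fderiv ℝ ψ) p₀ ((0:ℝ), Pi.single i (1:ℝ)) ((0:ℝ), Pi.single j (1:ℝ)))
            + (if i = j then ρ p₀ * (deriv (deriv g) (ρ p₀)
                * fderiv ℝ ρ p₀ ((0:ℝ), Pi.single j (1:ℝ))) else 0) := by
        intro j
        rw [(((hA.fun_mul (hvel ((0:ℝ), Pi.single i (1:ℝ)))).fun_mul
            (hvel ((0:ℝ), Pi.single j (1:ℝ)))).fun_add
            (((hA.fun_mul hg'ρ).fun_sub hgρ).mul_const (if i = j then (1:ℝ) else 0))).fderiv]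
        simp only [ContinuousLinearMap.add_apply, ContinuousLinearMap.coe_comp',
          Function.comp_apply, ContinuousLinearMap.zero_apply, ContinuousLinearMap.flip_apply,
          ContinuousLinearMap.smul_apply, ContinuousLinearMap.sub_apply,
          ContinuousLinearMap.coe_smul', Pi.smul_apply, smul_eq_mul, map_zero, zero_add]
        rw [hsym ((0:ℝ), Pi.single j (1:ℝ)) ((0:ℝ), Pi.single i (1:ℝ))]
        split_ifs <;> ring
      rw [hv1 ((0:ℝ), Pi.single i (1:ℝ)) ((1:ℝ), (0 : Fin n → ℝ))]
      rw [Finset.sum_congr rfl fun j _ => hv2 j]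
      rw [Finset.sum_add_distrib, Finset.sum_add_distrib, ← Finset.mul_sum, ← Finset.mul_sum]
      simp only [Finset.sum_ite_eq, Finset.mem_univ, if_true]
      linear_combination (fderiv ℝ ψ p₀ ((0:ℝ), Pi.single i (1:ℝ))) * hm
        + ρ p₀ * hb ((0:ℝ), Pi.single i (1:ℝ))
        + ρ p₀ * hsym ((1:ℝ), (0 : Fin n → ℝ)) ((0:ℝ), Pi.single i (1:ℝ))
    · -- energy
      have hE1 : fderiv ℝ (fun z => ρ z * (∑ k, fderiv ℝ ψ z ((0:ℝ), Pi.single k (1:ℝ))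
            * fderiv ℝ ψ z ((0:ℝ), Pi.single k (1:ℝ))) * 2⁻¹ + g (ρ z)) p₀ ((1:ℝ), (0 : Fin n → ℝ))
          = (∑ k, fderiv ℝ ψ p₀ ((0:ℝ), Pi.single k (1:ℝ))
              * fderiv ℝ ψ p₀ ((0:ℝ), Pi.single k (1:ℝ))) * 2⁻¹
              * fderiv ℝ ρ p₀ ((1:ℝ), (0 : Fin n → ℝ))
            + ρ p₀ * (∑ k, fderiv ℝ ψ p₀ ((0:ℝ), Pi.single k (1:ℝ))
              * fderiv ℝ (fderiv ℝ ψ) p₀ ((1:ℝ), (0 : Fin n → ℝ)) ((0:ℝ), Pi.single k (1:ℝ)))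
            + deriv g (ρ p₀) * fderiv ℝ ρ p₀ ((1:ℝ), (0 : Fin n → ℝ)) := by
        rw [(((hA.fun_mul hS).mul_const 2⁻¹).fun_add hgρ).fderiv]
        simp only [ContinuousLinearMap.add_apply, ContinuousLinearMap.coe_comp',
          Function.comp_apply, ContinuousLinearMap.zero_apply, ContinuousLinearMap.flip_apply,
          ContinuousLinearMap.smul_apply, ContinuousLinearMap.coe_sum', Finset.sum_apply,
          ContinuousLinearMap.coe_smul', Pi.smul_apply, smul_eq_mul, map_zero, zero_add]
        rw [hdbl ((1:ℝ), (0 : Fin n → ℝ))]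
        ring
      have hE2 : ∀ j : Fin n,
          fderiv ℝ (fun z => (ρ z * (∑ k, fderiv ℝ ψ z ((0:ℝ), Pi.single k (1:ℝ))
              * fderiv ℝ ψ z ((0:ℝ), Pi.single k (1:ℝ))) * 2⁻¹ + ρ z * deriv g (ρ z))
              * fderiv ℝ ψ z ((0:ℝ), Pi.single j (1:ℝ))) p₀ ((0:ℝ), Pi.single j (1:ℝ))
          = ((∑ k, fderiv ℝ ψ p₀ ((0:ℝ), Pi.single k (1:ℝ))
                * fderiv ℝ ψ p₀ ((0:ℝ), Pi.single k (1:ℝ))) * 2⁻¹ + deriv g (ρ p₀))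
              * (ρ p₀ * fderiv ℝ (fderiv ℝ ψ) p₀ ((0:ℝ), Pi.single j (1:ℝ)) ((0:ℝ), Pi.single j (1:ℝ))
                + fderiv ℝ ψ p₀ ((0:ℝ), Pi.single j (1:ℝ)) * fderiv ℝ ρ p₀ ((0:ℝ), Pi.single j (1:ℝ)))
            - ρ p₀ * (fderiv ℝ ψ p₀ ((0:ℝ), Pi.single j (1:ℝ))
                * fderiv ℝ (fderiv ℝ ψ) p₀ ((1:ℝ), (0 : Fin n → ℝ)) ((0:ℝ), Pi.single j (1:ℝ))) := by
        intro j
        rw [((((hA.fun_mul hS).mul_const 2⁻¹).fun_add (hA.fun_mul hg'ρ)).fun_mul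
            (hvel ((0:ℝ), Pi.single j (1:ℝ)))).fderiv]
        simp only [ContinuousLinearMap.add_apply, ContinuousLinearMap.coe_comp',
          Function.comp_apply, ContinuousLinearMap.zero_apply, ContinuousLinearMap.flip_apply,
          ContinuousLinearMap.smul_apply, ContinuousLinearMap.coe_sum', Finset.sum_apply,
          ContinuousLinearMap.coe_smul', Pi.smul_apply, smul_eq_mul, map_zero, zero_add]
        rw [hdbl ((0:ℝ), Pi.single j (1:ℝ))]
        linear_combination (fderiv ℝ ψ p₀ ((0:ℝ), Pi.single j (1:ℝ)) * ρ p₀)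
            * hb ((0:ℝ), Pi.single j (1:ℝ))
          - (fderiv ℝ ψ p₀ ((0:ℝ), Pi.single j (1:ℝ)) * ρ p₀)
            * hsym ((0:ℝ), Pi.single j (1:ℝ)) ((1:ℝ), (0 : Fin n → ℝ))
      rw [hE1, Finset.sum_congr rfl fun j _ => hE2 j, Finset.sum_sub_distrib,
        ← Finset.mul_sum, ← Finset.mul_sum]
      linear_combination ((∑ k, fderiv ℝ ψ p₀ ((0:ℝ), Pi.single k (1:ℝ))
          * fderiv ℝ ψ p₀ ((0:ℝ), Pi.single k (1:ℝ))) * 2⁻¹ + deriv g (ρ p₀)) * hm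
  exact ⟨fun p hp i => (main p hp).1 i, fun p hp => (main p hp).2⟩
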